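/- Let H be an adjacency k-resolved connected graph of order n₂ and let G be a connected graph with at least two vertices and diameter D(G) < k. Then dim_l(G ⊠ H) ≤ n₂·dim_l(G). -/

import Mathlib

open SimpleGraph

/-- The strong product of two simple graphs. -/
def strongProd {α β : Type*} (G : SimpleGraph α) (H : SimpleGraph β) :
    SimpleGraph (α × β) where
  Adj x y := (x.1 = y.1 ∧ H.Adj x.2 y.2) ∨ (x.2 = y.2 ∧ G.Adj x.1 y.1) ∨
      (G.Adj x.1 y.1 ∧ H.Adj x.2 y.2)
  symm := ⟨by
    rintro x y (⟨h1, h2⟩ | ⟨h1, h2⟩ | ⟨h1, h2⟩)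
    · exact Or.inl ⟨h1.symm, h2.symm⟩
    · exact Or.inr (Or.inl ⟨h1.symm, h2.symm⟩)
    · exact Or.inr (Or.inr ⟨h1.symm, h2.symm⟩)⟩
  loopless := ⟨by
    rintro x (⟨_, h⟩ | ⟨_, h⟩ | ⟨h, _⟩)
    · exact H.irrefl h
    · exact G.irrefl h
    · exact G.irrefl h⟩

/-- A set `S` is a local metric generator for `G` if every pair of adjacent
vertices is distinguished by some element of `S`. -/
def IsLocalMetricGenerator {α : Type*} (G : SimpleGraph α) (S : Set α) : Prop :=
  ∀ u v : α, G.Adj u v → ∃ s ∈ S, G.dist u s ≠ G.dist v s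

/-- The local metric dimension of a graph. -/
noncomputable def localMetricDim {α : Type*} [Fintype α] (G : SimpleGraph α) : ℕ :=
  sInf {n | ∃ S : Finset α, S.card = n ∧ IsLocalMetricGenerator G ↑S}

/-- A set `S` is a metric generator for `G` if every pair of distinct
vertices is distinguished by some element of `S`. -/
def IsMetricGenerator {α : Type*} (G : SimpleGraph α) (S : Set α) : Prop :=
  ∀ u v : α, u ≠ v → ∃ s ∈ S, G.dist u s ≠ G.dist v s

/-- The metric dimension of a graph. -/
noncomputable def metricDim {α : Type*} [Fintype α] (G : SimpleGraph α) : ℕ :=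
  sInf {n | ∃ S : Finset α, S.card = n ∧ IsMetricGenerator G ↑S}

/-- The eccentricity of a vertex: the maximum distance to another vertex. -/
noncomputable def eccentricity {α : Type*} (G : SimpleGraph α) (v : α) : ℕ :=
  sSup {d | ∃ u, G.dist v u = d}

/-- The diameter of a graph: maximum eccentricity. -/
noncomputable def graphDiam {α : Type*} (G : SimpleGraph α) : ℕ :=
  sSup {d | ∃ v, eccentricity G v = d}

/-- The radius of a graph: minimum eccentricity. -/
noncomputable def graphRadius {α : Type*} (G : SimpleGraph α) : ℕ :=
  sInf {d | ∃ v, eccentricity G v = d}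

/-- The interval `I[x,y]`: vertices lying on some shortest `x`–`y` path. -/
def interval {α : Type*} (G : SimpleGraph α) (x y : α) : Set α :=
  {w | G.dist x w + G.dist w y = G.dist x y}

/-- A graph is adjacency `k`-resolved if for every pair of adjacent vertices
`x, y` there is a vertex `w` with `d(y,w) ≥ k` and `x ∈ I[y,w]`, or
`d(x,w) ≥ k` and `y ∈ I[x,w]`. -/
def AdjKResolved {α : Type*} (G : SimpleGraph α) (k : ℕ) : Prop :=
  ∀ x y : α, G.Adj x y →
    ∃ w : α, (k ≤ G.dist y w ∧ x ∈ interval G y w) ∨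
      (k ≤ G.dist x w ∧ y ∈ interval G x w)

/-- The true twin equivalence relation: `u ≈ v` iff `N[u] = N[v]`. -/
def trueTwinSetoid {α : Type*} (G : SimpleGraph α) : Setoid α where
  r u v := insert u (G.neighborSet u) = insert v (G.neighborSet v)
  iseqv := ⟨fun _ => rfl, Eq.symm, Eq.trans⟩

section Aux

variable {α β : Type*} (G : SimpleGraph α) (H : SimpleGraph β)

/-- The embedding `x ↦ (a, x)` as a graph hom. -/
def homR (a : α) : H →g strongProd G H :=
  ⟨fun x => (a, x), fun h => Or.inl ⟨rfl, h⟩⟩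

/-- The embedding `x ↦ (x, b)` as a graph hom. -/
def homL (b : β) : G →g strongProd G H :=
  ⟨fun x => (x, b), fun h => Or.inr (Or.inl ⟨rfl, h⟩)⟩

lemma strong_walk_exists {a c : α} {b d : β} (p : G.Walk a c) (q : H.Walk b d) :
    ∃ w : (strongProd G H).Walk (a, b) (c, d), w.length ≤ max p.length q.length := by
  induction p generalizing b d q with
  | nil =>
    exact ⟨q.map (homR G H _), (SimpleGraph.Walk.length_map _ q).le.trans (le_max_right _ _)⟩
  | @cons a a' c h p ih =>
    cases q with
    | nil =>
      refine ⟨(SimpleGraph.Walk.cons h p).map (homL G H b), ?_⟩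
      exact (SimpleGraph.Walk.length_map _ _).le.trans (le_max_left _ _)
    | @cons b b' d h' q' =>
      obtain ⟨w, hw⟩ := ih q'
      refine ⟨SimpleGraph.Walk.cons (Or.inr (Or.inr ⟨h, h'⟩)) w, ?_⟩
      show w.length + 1 ≤ max (p.length + 1) (q'.length + 1)
      omega

lemma proj_walk_right {x y : α × β} (w : (strongProd G H).Walk x y) :
    ∃ q : H.Walk x.2 y.2, q.length ≤ w.length := by
  induction w with
  | nil => exact ⟨SimpleGraph.Walk.nil, by simp⟩
  | @cons x z y h w ih =>
    obtain ⟨q, hq⟩ := ih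
    rcases h with ⟨_, h2⟩ | ⟨h2, _⟩ | ⟨_, h2⟩
    · exact ⟨SimpleGraph.Walk.cons h2 q, Nat.succ_le_succ hq⟩
    · exact ⟨q.copy h2.symm rfl, (SimpleGraph.Walk.length_copy _ _ _).le.trans (Nat.le_succ_of_le hq)⟩
    · exact ⟨SimpleGraph.Walk.cons h2 q, Nat.succ_le_succ hq⟩

lemma proj_walk_left {x y : α × β} (w : (strongProd G H).Walk x y) :
    ∃ q : G.Walk x.1 y.1, q.length ≤ w.length := by
  induction w with
  | nil => exact ⟨SimpleGraph.Walk.nil, by simp⟩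
  | @cons x z y h w ih =>
    obtain ⟨q, hq⟩ := ih
    rcases h with ⟨h2, _⟩ | ⟨_, h2⟩ | ⟨h2, _⟩
    · exact ⟨q.copy h2.symm rfl, (SimpleGraph.Walk.length_copy _ _ _).le.trans (Nat.le_succ_of_le hq)⟩
    · exact ⟨SimpleGraph.Walk.cons h2 q, Nat.succ_le_succ hq⟩
    · exact ⟨SimpleGraph.Walk.cons h2 q, Nat.succ_le_succ hq⟩

lemma strong_connected (hG : G.Connected) (hH : H.Connected) :
    (strongProd G H).Connected := by
  have hne : Nonempty (α × β) := ⟨hG.nonempty.some, hH.nonempty.some⟩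
  rw [SimpleGraph.connected_iff]
  refine ⟨fun x y => ?_, hne⟩
  obtain ⟨p⟩ := hG x.1 y.1
  obtain ⟨q⟩ := hH x.2 y.2
  obtain ⟨w, _⟩ := strong_walk_exists G H p q
  exact ⟨w.copy (by simp) (by simp)⟩

lemma strong_dist (hG : G.Connected) (hH : H.Connected) (a c : α) (b d : β) :
    (strongProd G H).dist (a, b) (c, d) = max (G.dist a c) (H.dist b d) := by
  apply le_antisymm
  · obtain ⟨p, hp⟩ := hG.exists_walk_length_eq_dist a c
    obtain ⟨q, hq⟩ := hH.exists_walk_length_eq_dist b d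
    obtain ⟨w, hw⟩ := strong_walk_exists G H p q
    calc (strongProd G H).dist (a, b) (c, d) ≤ w.length := SimpleGraph.dist_le w
    _ ≤ _ := by rw [← hp, ← hq]; exact hw
  · obtain ⟨w, hw⟩ := (strong_connected G H hG hH).exists_walk_length_eq_dist (a, b) (c, d)
    obtain ⟨q, hq⟩ := proj_walk_right G H w
    obtain ⟨p, hp⟩ := proj_walk_left G H w
    refine max_le ?_ ?_
    · exact le_trans (SimpleGraph.dist_le p) (by omega)
    · exact le_trans (SimpleGraph.dist_le q) (by omega)

lemma dist_le_graphDiam [Fintype α] (hG : G.Connected) (a c : α) :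
    G.dist a c ≤ graphDiam G := by
  have hbd : ∀ u v : α, G.dist u v ≤ Fintype.card α := by
    intro u v
    obtain ⟨p, hp, hlen⟩ := (hG u v).exists_path_of_dist
    have := hp.length_lt
    omega
  have hecc : ∀ v : α, eccentricity G v ≤ Fintype.card α := by
    intro v
    unfold eccentricity
    refine csSup_le ⟨G.dist v v, v, rfl⟩ ?_
    rintro d ⟨u, rfl⟩
    exact hbd v u
  have h1 : G.dist a c ≤ eccentricity G a := by
    unfold eccentricity
    refine le_csSup ⟨Fintype.card α, ?_⟩ ⟨c, rfl⟩
    rintro d ⟨u, rfl⟩; exact hbd a u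
  refine h1.trans ?_
  unfold graphDiam
  refine le_csSup ⟨Fintype.card α, ?_⟩ ⟨a, rfl⟩
  rintro d ⟨v, rfl⟩; exact hecc v

end Aux

/-- if `H` is adjacency `k`-resolved and `D(G) < k`, then
`dim_l(G ⊠ H) ≤ n₂ · dim_l(G)`. -/
theorem stmt1 {α β : Type*} [Fintype α] [Fintype β]
    (G : SimpleGraph α) (H : SimpleGraph β)
    (hH : H.Connected) (k : ℕ) (hres : AdjKResolved H k)
    (hG : G.Connected) (hn1 : 2 ≤ Fintype.card α)
    (hD : graphDiam G < k) :
    localMetricDim (strongProd G H) ≤ Fintype.card β * localMetricDim G := by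
  classical
  have hedge : ∃ a b : α, G.Adj a b := by
    obtain ⟨a, b, hab⟩ := Fintype.exists_pair_of_one_lt_card
      (by omega : 1 < Fintype.card α)
    obtain ⟨p⟩ := hG a b
    cases p with
    | nil => exact absurd rfl hab
    | cons h _ => exact ⟨_, _, h⟩
  have hneG : {n | ∃ S : Finset α, S.card = n ∧ IsLocalMetricGenerator G ↑S}.Nonempty := by
    refine ⟨Fintype.card α, Finset.univ, by simp, fun u v huv => ⟨u, by simp, ?_⟩⟩
    simp [SimpleGraph.dist_eq_one_iff_adj.mpr huv.symm]
  obtain ⟨S, hcard, hSgen⟩ := Nat.sInf_mem hneG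
  obtain ⟨a0, b0, hab0⟩ := hedge
  obtain ⟨s0, hs0, -⟩ := hSgen a0 b0 hab0
  have key : ∀ (u1 v1 : α) (u2 v2 : β), G.Adj u1 v1 → H.dist u2 v2 ≤ 1 →
      H.dist v2 u2 ≤ 1 →
      ∃ s ∈ ↑(S ×ˢ (Finset.univ : Finset β)),
        (strongProd G H).dist (u1, u2) s ≠ (strongProd G H).dist (v1, v2) s := by
    intro u1 v1 u2 v2 hadj1 hle hle'
    obtain ⟨s, hs, hnes⟩ := hSgen u1 v1 hadj1
    rcases Nat.lt_or_ge (G.dist u1 s) (G.dist v1 s) with h | h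
    · refine ⟨(s, u2), by simp [Finset.mem_coe.mp hs], ?_⟩
      rw [strong_dist G H hG hH, strong_dist G H hG hH]
      simp only [SimpleGraph.dist_self]
      omega
    · refine ⟨(s, v2), by simp [Finset.mem_coe.mp hs], ?_⟩
      rw [strong_dist G H hG hH, strong_dist G H hG hH]
      simp only [SimpleGraph.dist_self]
      omega
  have hgen : IsLocalMetricGenerator (strongProd G H) ↑(S ×ˢ (Finset.univ : Finset β)) := by
    rintro ⟨u1, u2⟩ ⟨v1, v2⟩ hadj
    rcases hadj with ⟨he, hadj2⟩ | ⟨he, hadj1⟩ | ⟨hadj1, hadj2⟩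
    · dsimp only at he hadj2
      subst he
      have hd1 : G.dist u1 s0 ≤ graphDiam G := dist_le_graphDiam G hG u1 s0
      obtain ⟨w, hw | hw⟩ := hres u2 v2 hadj2
      · obtain ⟨hk, hint⟩ := hw
        have h1 : H.dist v2 u2 = 1 := SimpleGraph.dist_eq_one_iff_adj.mpr hadj2.symm
        have hint' : H.dist v2 u2 + H.dist u2 w = H.dist v2 w := hint
        refine ⟨(s0, w), by simp [Finset.mem_coe.mp hs0], ?_⟩
        rw [strong_dist G H hG hH, strong_dist G H hG hH]
        omega
      · obtain ⟨hk, hint⟩ := hw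
        have h1 : H.dist u2 v2 = 1 := SimpleGraph.dist_eq_one_iff_adj.mpr hadj2
        have hint' : H.dist u2 v2 + H.dist v2 w = H.dist u2 w := hint
        refine ⟨(s0, w), by simp [Finset.mem_coe.mp hs0], ?_⟩
        rw [strong_dist G H hG hH, strong_dist G H hG hH]
        omega
    · dsimp only at he hadj1
      subst he
      exact key u1 v1 u2 u2 hadj1 (by rw [SimpleGraph.dist_self]; omega) (by rw [SimpleGraph.dist_self]; omega)
    · exact key u1 v1 u2 v2 hadj1
        (le_of_eq (SimpleGraph.dist_eq_one_iff_adj.mpr hadj2))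
        (le_of_eq (SimpleGraph.dist_eq_one_iff_adj.mpr hadj2.symm))
  have hle : localMetricDim (strongProd G H) ≤ (S ×ˢ (Finset.univ : Finset β)).card :=
    Nat.sInf_le ⟨S ×ˢ (Finset.univ : Finset β), rfl, hgen⟩
  rw [Finset.card_product, Finset.card_univ, hcard, Nat.mul_comm] at hle
  exact hle
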